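/- arXiv:1712.03947 — 3 statements merged into one kernel-verified Lean document; each statement's English description precedes it below -/
import Mathlib

section
/- For all integers j ≥ l ≥ 1 and every i with 0 ≤ i < d_j, the image of the generalized cyclotomic class D_i^(p^j) under reduction modulo p^l is exactly D_(i mod d_l)^(p^l). -/
/-- The generalized cyclotomic class `D_i^(p^j)` of order `d_j = p^(j-1)·(p-1)/e`
with respect to a primitive root `g`:
`D_i^(p^j) = { g^(d_j·t + i) mod p^j : 0 ≤ t < e }`. -/
def Dclass (p e g j i : ℕ) : Set (ZMod (p ^ j)) :=
  {x | ∃ t < e, x = (g : ZMod (p ^ j)) ^ (p ^ (j - 1) * ((p - 1) / e) * t + i)}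

/-- Auxiliary: `(g : ZMod M)^m = 1` iff `M ∣ g^m - 1` over the integers. -/
lemma zmod_pow_eq_one_iff (M m g : ℕ) :
    (g : ZMod M) ^ m = 1 ↔ (M : ℤ) ∣ (g : ℤ) ^ m - 1 := by
  rw [← ZMod.intCast_zmod_eq_zero_iff_dvd]
  push_cast
  rw [sub_eq_zero]

lemma g_coprime (p : ℕ) (hp : p.Prime) (g : ℕ)
    (hg : orderOf (g : ZMod (p ^ 2)) = Nat.totient (p ^ 2)) :
    Nat.Coprime g p := by
  have htpos : 0 < Nat.totient (p ^ 2) := Nat.totient_pos.mpr (pow_pos hp.pos 2)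
  have hfin : IsOfFinOrder (g : ZMod (p ^ 2)) := by
    rw [← orderOf_pos_iff, hg]; exact htpos
  have hu : IsUnit (g : ZMod (p ^ 2)) := hfin.isUnit
  have := (ZMod.isUnit_iff_coprime g (p ^ 2)).mp hu
  exact this.coprime_dvd_right (dvd_pow_self p two_ne_zero)

lemma not_dvd_pow_int (p : ℕ) (hp : p.Prime) (g : ℕ) (hcop : Nat.Coprime g p) (m : ℕ) :
    ¬ (p : ℤ) ∣ (g : ℤ) ^ m := by
  intro h
  have hpg : (p : ℤ) ∣ (g : ℤ) := (Nat.prime_iff_prime_int.mp hp).dvd_of_dvd_pow h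
  have : p ∣ g := Int.natCast_dvd_natCast.mp hpg
  exact (Nat.Prime.coprime_iff_not_dvd hp).mp hcop.symm this

lemma fermat_dvd (p : ℕ) (hp : p.Prime) (g : ℕ) (hcop : Nat.Coprime g p) :
    (p : ℤ) ∣ (g : ℤ) ^ (p - 1) - 1 := by
  rw [← zmod_pow_eq_one_iff]
  have h : g ^ Nat.totient p ≡ 1 [MOD p] := Nat.ModEq.pow_totient hcop
  rw [Nat.totient_prime hp] at h
  have := (ZMod.natCast_eq_natCast_iff _ _ _).mpr h
  push_cast at this
  exact this

lemma mult_one (p : ℕ) (hp : p.Prime) (g : ℕ)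
    (hg : orderOf (g : ZMod (p ^ 2)) = Nat.totient (p ^ 2)) :
    emultiplicity (p : ℤ) ((g : ℤ) ^ (p - 1) - 1) = 1 := by
  have hcop := g_coprime p hp g hg
  apply emultiplicity_eq_of_dvd_of_not_dvd
  · rw [pow_one]; exact fermat_dvd p hp g hcop
  · intro h2
    have hsq : ((p ^ 2 : ℕ) : ℤ) ∣ (g : ℤ) ^ (p - 1) - 1 := by push_cast; exact h2
    have h1 : (g : ZMod (p ^ 2)) ^ (p - 1) = 1 := (zmod_pow_eq_one_iff _ _ _).mpr hsq
    have hdvd := orderOf_dvd_of_pow_eq_one h1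
    rw [hg, Nat.totient_prime_pow hp (by norm_num : 0 < 2)] at hdvd
    have hple : 0 < p - 1 := by have := hp.two_le; omega
    have := Nat.le_of_dvd hple hdvd
    have h2p := hp.two_le
    norm_num at this
    nlinarith

lemma mult_k (p : ℕ) (hp : p.Prime) (hodd : Odd p) (g : ℕ)
    (hg : orderOf (g : ZMod (p ^ 2)) = Nat.totient (p ^ 2)) (k : ℕ) :
    emultiplicity (p : ℤ) ((g : ℤ) ^ ((p - 1) * p ^ k) - 1) = 1 + k := by
  have hcop := g_coprime p hp g hg
  have h := Int.emultiplicity_pow_sub_pow hp hodd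
    (x := (g : ℤ) ^ (p - 1)) (y := 1) (fermat_dvd p hp g hcop)
    (not_dvd_pow_int p hp g hcop _) (p ^ k)
  rw [one_pow, ← pow_mul, mult_one p hp g hg, Nat.Prime.emultiplicity_pow_self hp] at h
  exact h

lemma ord_one (p : ℕ) (hp : p.Prime) (hodd : Odd p) (g : ℕ)
    (hg : orderOf (g : ZMod (p ^ 2)) = Nat.totient (p ^ 2)) :
    orderOf (g : ZMod p) = p - 1 := by
  have hcop := g_coprime p hp g hg
  set m := orderOf (g : ZMod p) with hm
  have hd : m ∣ p - 1 := by
    apply orderOf_dvd_of_pow_eq_one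
    rw [zmod_pow_eq_one_iff]
    exact fermat_dvd p hp g hcop
  have hdm : (p : ℤ) ∣ (g : ℤ) ^ m - 1 := by
    rw [← zmod_pow_eq_one_iff]
    exact pow_orderOf_eq_one _
  -- p^2 ∣ g^(m*p) - 1
  have h := Int.emultiplicity_pow_sub_pow hp hodd
    (x := (g : ℤ) ^ m) (y := 1) hdm (not_dvd_pow_int p hp g hcop _) p
  rw [one_pow, ← pow_mul] at h
  have h1 : (1 : ℕ∞) ≤ emultiplicity (p : ℤ) ((g : ℤ) ^ m - 1) :=
    le_emultiplicity_of_pow_dvd (by rwa [pow_one])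
  have hpp : emultiplicity p p = 1 := by
    have := Nat.Prime.emultiplicity_pow_self hp (n := 1)
    simpa using this
  rw [hpp] at h
  have h2 : (2 : ℕ∞) ≤ emultiplicity (p : ℤ) ((g : ℤ) ^ (m * p) - 1) := by
    rw [h]
    calc (2 : ℕ∞) = 1 + 1 := by norm_num
    _ ≤ emultiplicity (p : ℤ) ((g : ℤ) ^ m - 1) + 1 := add_le_add_left h1 1
  have hdvd2 : ((p ^ 2 : ℕ) : ℤ) ∣ (g : ℤ) ^ (m * p) - 1 := by
    push_cast
    exact pow_dvd_of_le_emultiplicity h2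
  have hone : (g : ZMod (p ^ 2)) ^ (m * p) = 1 := (zmod_pow_eq_one_iff _ _ _).mpr hdvd2
  have hdvd3 := orderOf_dvd_of_pow_eq_one hone
  rw [hg, Nat.totient_prime_pow hp (by norm_num : 0 < 2)] at hdvd3
  norm_num at hdvd3
  -- p * (p-1) ∣ m * p  →  (p-1) ∣ m
  have hd2 : p - 1 ∣ m := by
    have : p * (p - 1) ∣ p * m := by
      rwa [mul_comm m p] at hdvd3
    exact (Nat.mul_dvd_mul_iff_left hp.pos).mp this
  exact Nat.dvd_antisymm hd hd2

lemma ord_l (p : ℕ) (hp : p.Prime) (hodd : Odd p) (g : ℕ)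
    (hg : orderOf (g : ZMod (p ^ 2)) = Nat.totient (p ^ 2))
    (l : ℕ) (hl : 1 ≤ l) :
    orderOf (g : ZMod (p ^ l)) = Nat.totient (p ^ l) := by
  have hcop := g_coprime p hp g hg
  set n := orderOf (g : ZMod (p ^ l)) with hn
  have hcl : Nat.Coprime g (p ^ l) := hcop.pow_right l
  have hnd : n ∣ Nat.totient (p ^ l) := by
    apply orderOf_dvd_of_pow_eq_one
    rw [zmod_pow_eq_one_iff]
    have h : g ^ Nat.totient (p ^ l) ≡ 1 [MOD p ^ l] := Nat.ModEq.pow_totient hcl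
    have := (ZMod.natCast_eq_natCast_iff _ _ _).mpr h
    rw [← zmod_pow_eq_one_iff]
    push_cast at this ⊢
    exact this
  have h1n : p - 1 ∣ n := by
    rw [← ord_one p hp hodd g hg]
    apply orderOf_dvd_of_pow_eq_one
    rw [zmod_pow_eq_one_iff]
    have hdl : ((p ^ l : ℕ) : ℤ) ∣ (g : ℤ) ^ n - 1 := by
      rw [← zmod_pow_eq_one_iff]
      exact pow_orderOf_eq_one _
    exact dvd_trans (by exact_mod_cast dvd_pow_self (p : ℤ) (by omega : l ≠ 0)) hdl
  rw [Nat.totient_prime_pow hp hl] at hnd ⊢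
  obtain ⟨k, hk⟩ := h1n
  have hkd : k ∣ p ^ (l - 1) := by
    have hpos : 0 < p - 1 := by have := hp.two_le; omega
    have : (p - 1) * k ∣ (p - 1) * p ^ (l - 1) := by
      rw [← hk, mul_comm (p - 1) (p ^ (l - 1))]; exact hnd
    exact (Nat.mul_dvd_mul_iff_left hpos).mp this
  obtain ⟨a, ha, hka⟩ := (Nat.dvd_prime_pow hp).mp hkd
  have hla : a = l - 1 := by
    by_contra hne
    have hdl : ((p : ℤ)) ^ l ∣ (g : ℤ) ^ n - 1 := by
      have := (zmod_pow_eq_one_iff (p ^ l) n g).mp (pow_orderOf_eq_one _)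
      push_cast at this
      exact this
    have hle := le_emultiplicity_of_pow_dvd hdl
    rw [hk, hka, mult_k p hp hodd g hg a] at hle
    have : l ≤ 1 + a := by exact_mod_cast hle
    omega
  rw [hk, hka, hla, mul_comm]

/-- For `j ≥ l ≥ 1` and `0 ≤ i < d_j`, the image of `D_i^(p^j)` under
reduction modulo `p^l` is exactly `D_(i mod d_l)^(p^l)`. -/
theorem Dclass_reduction
    (p : ℕ) (hp : p.Prime) (hodd : Odd p)
    (e : ℕ) (he : 0 < e) (hef : e ∣ p - 1)
    (g : ℕ) (hg : orderOf (g : ZMod (p ^ 2)) = Nat.totient (p ^ 2))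
    (j l : ℕ) (hl : 1 ≤ l) (hlj : l ≤ j)
    (i : ℕ) (hi : i < p ^ (j - 1) * ((p - 1) / e)) :
    (ZMod.castHom (pow_dvd_pow p hlj) (ZMod (p ^ l))) '' Dclass p e g j i
      = Dclass p e g l (i % (p ^ (l - 1) * ((p - 1) / e))) := by
  haveI : NeZero e := ⟨he.ne'⟩
  set f := (p - 1) / e with hf_def
  set dl := p ^ (l - 1) * f with hdl_def
  set dj := p ^ (j - 1) * f with hdj_def
  have h2p := hp.two_le
  have hef' : e * f = p - 1 := Nat.mul_div_cancel' hef
  have hf : 0 < f := by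
    rcases Nat.eq_zero_or_pos f with h | h
    · rw [h, mul_zero] at hef'; omega
    · exact h
  have hdl_pos : 0 < dl := Nat.mul_pos (pow_pos hp.pos _) hf
  set q := i / dl with hq_def
  -- order of g mod p^l
  have horder : orderOf (g : ZMod (p ^ l)) = dl * e := by
    rw [ord_l p hp hodd g hg l hl, Nat.totient_prime_pow hp hl, hdl_def,
      mul_assoc, mul_comm f e, hef']
  have hmod : ∀ A B : ℕ, A ≡ B [MOD dl * e] →
      (g : ZMod (p ^ l)) ^ A = (g : ZMod (p ^ l)) ^ B := by
    intro A B h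
    rw [← pow_mod_orderOf _ A, ← pow_mod_orderOf _ B, horder]
    exact congrArg _ h
  have hdj : dj = p ^ (j - l) * dl := by
    rw [hdj_def, hdl_def, ← mul_assoc, ← pow_add]
    congr 2
    omega
  have hexp : ∀ t : ℕ, dj * t + i = dl * (p ^ (j - l) * t + q) + i % dl := by
    intro t
    have h0 : dl * q + i % dl = i := Nat.div_add_mod i dl
    calc dj * t + i = p ^ (j - l) * dl * t + (dl * q + i % dl) := by rw [hdj, h0]
    _ = dl * (p ^ (j - l) * t + q) + i % dl := by ring
  have hcong2 : ∀ m s : ℕ, m ≡ s [MOD e] →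
      dl * m + i % dl ≡ dl * s + i % dl [MOD dl * e] :=
    fun m s h => (h.mul_left' _).add_right _
  have hcast : ∀ K : ℕ, (ZMod.castHom (pow_dvd_pow p hlj) (ZMod (p ^ l)))
      ((g : ZMod (p ^ j)) ^ K) = (g : ZMod (p ^ l)) ^ K := by
    intro K
    rw [map_pow, map_natCast]
  have hpe : Nat.Coprime (p ^ (j - l)) e := by
    have hp1 : Nat.Coprime p (p - 1) := by
      obtain ⟨m, rfl⟩ : ∃ m, p = m + 1 := ⟨p - 1, by omega⟩
      simp [Nat.add_comm]
    exact (hp1.coprime_dvd_right hef).pow_left _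
  ext x
  simp only [Set.mem_image, Dclass, Set.mem_setOf_eq]
  constructor
  · rintro ⟨a, ⟨t, ht, rfl⟩, rfl⟩
    refine ⟨(p ^ (j - l) * t + q) % e, Nat.mod_lt _ he, ?_⟩
    rw [hcast]
    apply hmod
    rw [hexp t]
    exact hcong2 _ _ ((Nat.mod_modEq _ _).symm)
  · rintro ⟨s, hs, rfl⟩
    set w : ZMod e := ((p ^ (j - l) : ℕ) : ZMod e)⁻¹ * ((s : ZMod e) - (q : ZMod e)) with hw
    set t := w.val with htdef
    have ht : t < e := ZMod.val_lt w
    have hinv : ((p ^ (j - l) : ℕ) : ZMod e) * ((p ^ (j - l) : ℕ) : ZMod e)⁻¹ = 1 :=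
      ZMod.coe_mul_inv_eq_one _ hpe
    have hcongr : p ^ (j - l) * t + q ≡ s [MOD e] := by
      rw [← ZMod.natCast_eq_natCast_iff]
      have hwv : ((t : ℕ) : ZMod e) = w := ZMod.natCast_rightInverse w
      rw [Nat.cast_add, Nat.cast_mul, hwv, hw]
      linear_combination ((s : ZMod e) - (q : ZMod e)) * hinv
    refine ⟨(g : ZMod (p ^ j)) ^ (dj * t + i), ⟨t, ht, rfl⟩, ?_⟩
    rw [hcast]
    apply hmod
    rw [hexp t]
    exact hcong2 _ _ hcongr
end

section
/- Let 1 ≤ j ≤ n and let a be an integer whose residue modulo p^j lies in D_k^(p^j). Then for every index i and every integer l with 0 ≤ l < j, E_i^(p^j)(α_j^(p^l·a)) = E_((i+k) mod d_(j−l))^(p^(j−l))(α_(j−l)), and for every l ≥ j, E_i^(p^j)(α_j^(p^l·a)) equals e mod 2 (as an element of F₂ ⊆ ᾱ). -/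
/-- `E_l^(p^j)(x) = Σ_{i ∈ D_l^(p^j)} x^i`, exponents being the integer
representatives `g^(d_j·t + l) mod p^j ∈ [0, p^j)` of the elements of `D_l^(p^j)`. -/
noncomputable def Epoly (p e g j l : ℕ) (x : AlgebraicClosure (ZMod 2)) :
    AlgebraicClosure (ZMod 2) :=
  ∑ t ∈ Finset.range e, x ^ (g ^ (p ^ (j - 1) * ((p - 1) / e) * t + l) % p ^ j)

/-- `H_k^(p^j)(x) = Σ_{i=0}^{d_j/2-1} E_((i+k) mod d_j)^(p^j)(x)`. -/
noncomputable def Hpoly (p e g j k : ℕ) (x : AlgebraicClosure (ZMod 2)) :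
    AlgebraicClosure (ZMod 2) :=
  ∑ i ∈ Finset.range (p ^ (j - 1) * ((p - 1) / e) / 2),
    Epoly p e g j ((i + k) % (p ^ (j - 1) * ((p - 1) / e))) x

/-- `T_k^(p^j)(x) = H_k^(p^j)(x) + H_k^(p^(j-1))(x^p) + ⋯ + H_k^(p)(x^(p^(j-1)))`. -/
noncomputable def Tpoly (p e g j k : ℕ) (x : AlgebraicClosure (ZMod 2)) :
    AlgebraicClosure (ZMod 2) :=
  ∑ l ∈ Finset.range j, Hpoly p e g (j - l) k (x ^ p ^ l)

/-- If `x ^ N = 1` then `x ^ u` only depends on `u` mod `N`. -/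
lemma pow_root_congr {M : Type*} [Monoid M] {x : M} {N : ℕ} (hx : x ^ N = 1)
    {u v : ℕ} (h : u ≡ v [MOD N]) : x ^ u = x ^ v := by
  wlog hle : u ≤ v generalizing u v
  · exact (this h.symm (by omega)).symm
  obtain ⟨c, hc⟩ := (Nat.modEq_iff_dvd' hle).mp h
  have hv : v = u + N * c := by omega
  rw [hv, pow_add, pow_mul, hx, one_pow, mul_one]

/-- If `g ^ N ≡ 1 [MOD P]` then `g ^ u mod P` only depends on `u` mod `N`. -/
lemma pow_exp_congr {g N P : ℕ} (hg : g ^ N ≡ 1 [MOD P]) {u v : ℕ}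
    (h : u ≡ v [MOD N]) : g ^ u ≡ g ^ v [MOD P] := by
  wlog hle : u ≤ v generalizing u v
  · exact (this h.symm (by omega)).symm
  obtain ⟨c, hc⟩ := (Nat.modEq_iff_dvd' hle).mp h
  have hv : v = u + N * c := by omega
  calc g ^ u = g ^ u * 1 ^ c := by rw [one_pow, mul_one]
    _ ≡ g ^ u * (g ^ N) ^ c [MOD P] := ((hg.symm).pow c).mul_left _
    _ = g ^ v := by rw [hv, pow_add, pow_mul]

/-- Summing an `e`-periodic function over a complete residue system shifted by a
unit multiple gives the same sum as over `range e`. -/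
lemma sum_shift {M : Type*} [AddCommMonoid M] {e : ℕ} (he : 0 < e)
    (h : ℕ → M) (hper : ∀ x y : ℕ, x % e = y % e → h x = h y)
    (w c : ℕ) (hw : Nat.Coprime w e) :
    ∑ t ∈ Finset.range e, h (w * t + c) = ∑ t ∈ Finset.range e, h t := by
  rw [← Fin.sum_univ_eq_sum_range (fun t => h (w * t + c)) e,
    ← Fin.sum_univ_eq_sum_range h e]
  have hlt : ∀ t : Fin e, (w * (t : ℕ) + c) % e < e := fun t => Nat.mod_lt _ he
  apply Fintype.sum_bijective (fun t : Fin e => (⟨(w * (t : ℕ) + c) % e, hlt t⟩ : Fin e))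
  · refine Finite.injective_iff_bijective.mp ?_
    intro t1 t2 hteq
    have h1 : (w * (t1 : ℕ) + c) % e = (w * (t2 : ℕ) + c) % e := by
      simpa using congrArg Fin.val hteq
    have h2 : w * (t1 : ℕ) ≡ w * (t2 : ℕ) [MOD e] := Nat.ModEq.add_right_cancel' c h1
    have h3 := h2.cancel_left_of_coprime hw.symm
    have h4 : (t1 : ℕ) % e = (t2 : ℕ) % e := h3
    exact Fin.ext (by rw [← Nat.mod_eq_of_lt t1.isLt, ← Nat.mod_eq_of_lt t2.isLt]; exact h4)
  · intro t
    exact hper _ _ (Nat.mod_mod_of_dvd _ dvd_rfl).symm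

/-- for `1 ≤ j ≤ n` and `a` whose residue mod `p^j` lies in `D_k^(p^j)`:
for `0 ≤ l < j`, `E_i^(p^j)(α_j^(p^l·a)) = E_((i+k) mod d_(j-l))^(p^(j-l))(α_(j-l))`,
and for `l ≥ j`, `E_i^(p^j)(α_j^(p^l·a)) = e mod 2` in `F₂ ⊆ ᾱ`.
Here `α_j = α_n^(p^(n-j))`. -/
theorem Epoly_eval
    (p : ℕ) (hp : p.Prime) (hodd : Odd p)
    (e r : ℕ) (he : 0 < e) (hef : e ∣ p - 1) (hr : 1 ≤ r) (hf : (p - 1) / e = 2 ^ r)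
    (g : ℕ) (hg : orderOf (g : ZMod (p ^ 2)) = Nat.totient (p ^ 2))
    (n j : ℕ) (hj : 1 ≤ j) (hjn : j ≤ n)
    (α : AlgebraicClosure (ZMod 2)) (hα : IsPrimitiveRoot α (p ^ n))
    (k a : ℕ) (ha : ((a : ZMod (p ^ j)) ∈ Dclass p e g j k)) :
    (∀ l < j, ∀ i : ℕ,
        Epoly p e g j i ((α ^ p ^ (n - j)) ^ (p ^ l * a))
          = Epoly p e g (j - l) ((i + k) % (p ^ (j - l - 1) * ((p - 1) / e)))
              (α ^ p ^ (n - (j - l)))) ∧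
    (∀ l, j ≤ l → ∀ i : ℕ,
        Epoly p e g j i ((α ^ p ^ (n - j)) ^ (p ^ l * a))
          = algebraMap (ZMod 2) (AlgebraicClosure (ZMod 2)) (e : ZMod 2)) := by
  obtain ⟨s, hs, hsa⟩ := ha
  have hp1 : 1 < p := hp.one_lt
  have hppos : 0 < p := hp.pos
  have hfpos : 0 < (p - 1) / e := by rw [hf]; positivity
  -- g is coprime to p
  have hgp2 : Nat.Coprime g (p ^ 2) := by
    rw [← ZMod.isUnit_iff_coprime]
    have h1 : (g : ZMod (p ^ 2)) ^ Nat.totient (p ^ 2) = 1 := by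
      rw [← hg]; exact pow_orderOf_eq_one _
    exact (isOfFinOrder_iff_pow_eq_one.mpr
      ⟨Nat.totient (p ^ 2), Nat.totient_pos.mpr (by positivity), h1⟩).isUnit
  have hgp : Nat.Coprime g p :=
    Nat.Coprime.coprime_dvd_right (dvd_pow_self p two_ne_zero) hgp2
  have hpe : Nat.Coprime p e := by
    refine Nat.Coprime.coprime_dvd_right hef ?_
    rw [hp.coprime_iff_not_dvd]
    intro hdvd
    have := Nat.le_of_dvd (by omega) hdvd
    omega
  constructor
  · -- case l < j
    intro l hl i
    simp only [Epoly]
    set f' := (p - 1) / e with hf'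
    set dj := p ^ (j - 1) * f' with hdj
    set dm := p ^ (j - l - 1) * f' with hdm
    have hdmpos : 0 < dm := by rw [hdm]; positivity
    have hdjdm : dj = dm * p ^ l := by
      rw [hdj, hdm]
      have hje : j - 1 = (j - l - 1) + l := by omega
      rw [hje, pow_add]; ring
    -- the primitive p^(j-l)-th root γ
    have hnm : p ^ n = p ^ (n - (j - l)) * p ^ (j - l) := by
      rw [← pow_add]; congr 1; omega
    have hγ : IsPrimitiveRoot (α ^ p ^ (n - (j - l))) (p ^ (j - l)) :=
      hα.pow (by positivity) hnm
    set γ := α ^ p ^ (n - (j - l)) with hγdef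
    have hγ1 : γ ^ p ^ (j - l) = 1 := hγ.pow_eq_one
    have hx : (α ^ p ^ (n - j)) ^ (p ^ l * a) = γ ^ a := by
      have hexp : p ^ (n - j) * (p ^ l * a) = p ^ (n - (j - l)) * a := by
        rw [← mul_assoc, ← pow_add]
        congr 2
        omega
      rw [hγdef, ← pow_mul, ← pow_mul, hexp]
    -- Euler's theorem mod p^(j-l)
    have htot : Nat.totient (p ^ (j - l)) = e * dm := by
      rw [Nat.totient_prime_pow hp (by omega : 0 < j - l)]
      have h1 : e * dm = p ^ (j - l - 1) * (e * f') := by rw [hdm]; ring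
      rw [h1, hf', Nat.mul_div_cancel' hef]
    have hgmod : g ^ (e * dm) ≡ 1 [MOD p ^ (j - l)] := by
      rw [← htot]
      exact Nat.ModEq.pow_totient (hgp.pow_right _)
    -- the congruence for a
    have haeq : a ≡ g ^ (dj * s + k) [MOD p ^ j] := by
      have hcast : ((a : ℕ) : ZMod (p ^ j)) = ((g ^ (dj * s + k) : ℕ) : ZMod (p ^ j)) := by
        push_cast; exact hsa
      exact (ZMod.natCast_eq_natCast_iff _ _ _).mp hcast
    set m0 := (i + k) % dm with hm0
    set q := (i + k) / dm with hq0
    have hq : dm * q + m0 = i + k := Nat.div_add_mod _ _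
    set h : ℕ → AlgebraicClosure (ZMod 2) := fun u => γ ^ (g ^ (dm * u + m0)) with hh
    have hper : ∀ x y : ℕ, x % e = y % e → h x = h y := by
      intro x y hxy
      apply pow_root_congr hγ1
      apply pow_exp_congr hgmod
      have h1 : dm * x ≡ dm * y [MOD dm * e] := Nat.ModEq.mul_left' dm hxy
      rw [mul_comm dm e] at h1
      exact h1.add_right m0
    have hdvd : (p : ℕ) ^ (j - l) ∣ p ^ j := pow_dvd_pow p (by omega)
    rw [hx]
    have hterm : ∀ t ∈ Finset.range e,
        (γ ^ a) ^ (g ^ (dj * t + i) % p ^ j) = h (p ^ l * t + (p ^ l * s + q)) := by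
      intro t _
      rw [← pow_mul]
      have e1 : a * (g ^ (dj * t + i) % p ^ j)
          ≡ g ^ (dj * s + k) * g ^ (dj * t + i) [MOD p ^ j] :=
        ((Nat.mod_modEq _ _).mul_left a).trans (haeq.mul_right _)
      have e2 := pow_root_congr hγ1 (e1.of_dvd hdvd)
      rw [e2, ← pow_add, hh]
      congr 2
      rw [hdjdm]
      have h2 : dm * (p ^ l * t + (p ^ l * s + q)) + m0
          = dm * p ^ l * s + dm * p ^ l * t + (dm * q + m0) := by
        ring
      rw [h2, hq]
      ring
    rw [Finset.sum_congr rfl hterm,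
      sum_shift he h hper (p ^ l) (p ^ l * s + q) (Nat.Coprime.pow_left l hpe)]
    refine Finset.sum_congr rfl fun t _ => ?_
    simp only [hh]
    exact (pow_root_congr hγ1 (Nat.mod_modEq _ _)).symm
  · -- case j ≤ l
    intro l hl i
    have hx : (α ^ p ^ (n - j)) ^ (p ^ l * a) = 1 := by
      rw [← pow_mul]
      have h2 : p ^ (n - j) * (p ^ l * a) = p ^ n * (p ^ (l - j) * a) := by
        rw [← mul_assoc, ← mul_assoc, ← pow_add, ← pow_add]
        congr 2
        omega
      rw [h2, pow_mul, hα.pow_eq_one, one_pow]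
    simp [Epoly, hx, Finset.sum_const, Finset.card_range, map_natCast]
end

section
/- For every j with 1 ≤ j ≤ n, every index i, and every integer a with gcd(a, p) = 1, one has T_i^(p^j)(α_j^a) + T_((i + d_j/2) mod d_j)^(p^j)(α_j^a) = 1 in ᾱ. -/
open Finset in
private lemma aux_sum_rot_one {M : Type*} [AddCommMonoid M] (G : ℕ → M) (d : ℕ)
    (hG : ∀ i, G (i + d) = G i) :
    ∑ i ∈ range d, G (i + 1) = ∑ i ∈ range d, G i := by
  cases d with
  | zero => simp
  | succ d' =>
    rw [Finset.sum_range_succ, Finset.sum_range_succ' G]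
    have h0 : G (d' + 1) = G 0 := by simpa using hG 0
    rw [h0, add_comm]

open Finset in
private lemma aux_sum_rot {M : Type*} [AddCommMonoid M] (F : ℕ → M) (d : ℕ)
    (hF : ∀ i, F (i + d) = F i) (k : ℕ) :
    ∑ i ∈ range d, F (i + k) = ∑ i ∈ range d, F i := by
  induction k with
  | zero => simp
  | succ k ih =>
    calc ∑ i ∈ range d, F (i + (k + 1)) = ∑ i ∈ range d, F ((i + 1) + k) := by
          refine Finset.sum_congr rfl fun i _ => ?_
          rw [show i + (k + 1) = (i + 1) + k by omega]
      _ = ∑ i ∈ range d, F (i + k) :=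
          aux_sum_rot_one (fun i => F (i + k)) d (fun i => by
            show F (i + d + k) = F (i + k)
            rw [show i + d + k = i + k + d by omega, hF])
      _ = _ := ih

open Finset in
private lemma aux_sum_range_mul {M : Type*} [AddCommMonoid M] (f : ℕ → M) (d : ℕ) :
    ∀ e, ∑ s ∈ range (d * e), f s = ∑ t ∈ range e, ∑ l ∈ range d, f (d * t + l) := by
  intro e
  induction e with
  | zero => simp
  | succ e ih =>
    rw [Nat.mul_succ, Finset.sum_range_add, ih, Finset.sum_range_succ]

private lemma aux_pow_cast_eq_one_iff (M g N : ℕ) :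
    (g : ZMod M) ^ N = 1 ↔ (M : ℤ) ∣ (g : ℤ) ^ N - 1 := by
  rw [← Nat.cast_pow, ← Nat.cast_one (R := ZMod M), ZMod.natCast_eq_natCast_iff,
    Nat.modEq_iff_dvd]
  push_cast
  rw [dvd_sub_comm]

private lemma aux_g_coprime (p g : ℕ) (hp : p.Prime)
    (hg : orderOf (g : ZMod (p ^ 2)) = Nat.totient (p ^ 2)) : Nat.Coprime g p := by
  have hgu : IsUnit (g : ZMod (p ^ 2)) := by
    apply IsUnit.of_pow_eq_one (n := orderOf (g : ZMod (p ^ 2))) (pow_orderOf_eq_one _)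
    rw [hg]
    exact (Nat.totient_pos.mpr (by have := hp.pos; positivity)).ne'
  have h2 := (ZMod.isUnit_iff_coprime g (p ^ 2)).mp hgu
  exact Nat.Coprime.coprime_dvd_right (dvd_pow_self p (by norm_num)) h2

private lemma aux_order_lift (p g : ℕ) (hp : p.Prime) (hodd : Odd p)
    (hg : orderOf (g : ZMod (p ^ 2)) = Nat.totient (p ^ 2)) :
    ∀ m, 1 ≤ m → orderOf (g : ZMod (p ^ m)) = p ^ (m - 1) * (p - 1) := by
  haveI : Fact p.Prime := ⟨hp⟩
  haveI : NeZero p := ⟨hp.ne_zero⟩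
  have hp3 : 3 ≤ p := by
    rcases hodd with ⟨w, hw⟩; have := hp.two_le; omega
  have htot2 : Nat.totient (p ^ 2) = p * (p - 1) := by
    rw [Nat.totient_prime_pow hp (by norm_num)]; norm_num
  have hcop : Nat.Coprime g p := aux_g_coprime p g hp hg
  have hndg : ¬ (p : ℤ) ∣ (g : ℤ) := by
    rw [Int.natCast_dvd_natCast]
    exact (Nat.Prime.coprime_iff_not_dvd hp).mp hcop.symm
  have hPZ : Prime ((p : ℤ)) := Nat.prime_iff_prime_int.mp hp
  have hg0 : (g : ZMod p) ≠ 0 := by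
    intro h
    rw [ZMod.natCast_eq_zero_iff] at h
    exact hndg (by exact_mod_cast Int.natCast_dvd_natCast.mpr h)
  have hferm : (p : ℤ) ∣ (g : ℤ) ^ (p - 1) - 1 := by
    have := ZMod.pow_card_sub_one_eq_one hg0
    exact (aux_pow_cast_eq_one_iff p g (p - 1)).mp this
  have hnd1 : ¬ (p : ℤ) ∣ (g : ℤ) ^ (p - 1) := fun h => hndg (hPZ.dvd_of_dvd_pow h)
  have hnd2 : ¬ ((p : ℤ)) ^ 2 ∣ (g : ℤ) ^ (p - 1) - 1 := by
    intro h
    have h1 : (g : ZMod (p ^ 2)) ^ (p - 1) = 1 := by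
      rw [aux_pow_cast_eq_one_iff]; push_cast; exact h
    have h2 := orderOf_dvd_of_pow_eq_one h1
    rw [hg, htot2] at h2
    have h3 := Nat.le_of_dvd (by omega) h2
    have h4 : 2 * (p - 1) ≤ p * (p - 1) := Nat.mul_le_mul_right _ (by omega)
    omega
  have hmult1 : emultiplicity ((p : ℤ)) ((g : ℤ) ^ (p - 1) - 1) = (1 : ℕ) := by
    rw [emultiplicity_eq_coe]
    constructor
    · rw [pow_one]; exact hferm
    · norm_num; exact hnd2
  have hmultk : ∀ k : ℕ,
      emultiplicity ((p : ℤ)) ((g : ℤ) ^ ((p - 1) * p ^ k) - 1) = (k + 1 : ℕ) := by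
    intro k
    have h := emultiplicity_pow_prime_pow_sub_pow_prime_pow (x := (g : ℤ) ^ (p - 1)) (y := 1)
      hPZ hodd (by simpa using hferm) hnd1 k
    rw [one_pow, ← pow_mul, hmult1] at h
    rw [h]
    push_cast
    ring
  have hord1p : p - 1 ∣ orderOf (g : ZMod (p ^ 1)) := by
    set o1 := orderOf (g : ZMod (p ^ 1)) with ho1
    have h1 : (p : ℤ) ∣ (g : ℤ) ^ o1 - 1 := by
      have := (aux_pow_cast_eq_one_iff (p ^ 1) g o1).mp (pow_orderOf_eq_one _)
      simpa using this
    have h2 : ((p : ℤ)) ^ 2 ∣ (g : ℤ) ^ (o1 * p) - 1 := by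
      have := dvd_sub_pow_of_dvd_sub (R := ℤ) (p := p) (a := (g : ℤ) ^ o1) (b := 1) h1 1
      simpa [pow_succ, ← pow_mul, pow_one] using this
    have h3 : (g : ZMod (p ^ 2)) ^ (o1 * p) = 1 := by
      rw [aux_pow_cast_eq_one_iff]; push_cast; exact h2
    have h4 := orderOf_dvd_of_pow_eq_one h3
    rw [hg, htot2] at h4
    have h5 : p * (p - 1) ∣ p * o1 := by rwa [mul_comm o1 p] at h4
    exact (Nat.mul_dvd_mul_iff_left (show 0 < p by omega)).mp h5
  intro m hm
  have hdvd_tot : orderOf (g : ZMod (p ^ m)) ∣ p ^ (m - 1) * (p - 1) := by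
    apply orderOf_dvd_of_pow_eq_one
    rw [aux_pow_cast_eq_one_iff]
    push_cast
    apply pow_dvd_of_le_emultiplicity (k := m)
    rw [mul_comm (p ^ (m - 1)) (p - 1), hmultk (m - 1)]
    exact_mod_cast le_of_eq (by omega : m = m - 1 + 1)
  have hcast : orderOf (g : ZMod (p ^ 1)) ∣ orderOf (g : ZMod (p ^ m)) := by
    have hφ := orderOf_map_dvd
      (ZMod.castHom (pow_dvd_pow p hm : p ^ 1 ∣ p ^ m) (ZMod (p ^ 1))).toMonoidHom
      (g : ZMod (p ^ m))
    simpa using hφ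
  have h1dvd : p - 1 ∣ orderOf (g : ZMod (p ^ m)) := hord1p.trans hcast
  obtain ⟨c, hc⟩ := h1dvd
  have hcdvd : c ∣ p ^ (m - 1) := by
    have h : (p - 1) * c ∣ (p - 1) * p ^ (m - 1) := by
      rw [← hc, mul_comm (p - 1) (p ^ (m - 1))]; exact hdvd_tot
    exact (Nat.mul_dvd_mul_iff_left (show 0 < p - 1 by omega)).mp h
  obtain ⟨s, hs, hcs⟩ := (Nat.dvd_prime_pow hp).1 hcdvd
  have hsm : s = m - 1 := by
    by_contra hne
    have hm2 : 2 ≤ m := by omega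
    have hs' : s ≤ m - 2 := by omega
    have hdvd' : orderOf (g : ZMod (p ^ m)) ∣ (p - 1) * p ^ (m - 2) := by
      rw [hc, hcs]
      exact mul_dvd_mul_left _ (pow_dvd_pow p hs')
    have hone : (g : ZMod (p ^ m)) ^ ((p - 1) * p ^ (m - 2)) = 1 :=
      orderOf_dvd_iff_pow_eq_one.mp hdvd'
    rw [aux_pow_cast_eq_one_iff] at hone
    push_cast at hone
    have hmu := hmultk (m - 2)
    have hnot := (emultiplicity_eq_coe.1 hmu).2
    rw [show m - 2 + 1 + 1 = m by omega] at hnot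
    exact hnot hone
  rw [hc, hcs, hsm, mul_comm]

open Finset in
private lemma aux_sum_over_units (p g m : ℕ) (hp : p.Prime) (hcop : Nat.Coprime g p)
    (hord : orderOf ((g : ℕ) : ZMod (p ^ m)) = p ^ (m - 1) * (p - 1)) (hm : 1 ≤ m)
    (β : AlgebraicClosure (ZMod 2)) (hβ : IsPrimitiveRoot β (p ^ m)) :
    ∑ s ∈ range (p ^ (m - 1) * (p - 1)), β ^ (g ^ s % p ^ m)
      = if m = 1 then 1 else 0 := by
  have hp1 : 1 < p := hp.one_lt
  have hpm : 0 < p ^ m := by positivity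
  have hpm1 : 1 < p ^ m := Nat.one_lt_pow (by omega) hp1
  have hndg : ¬ p ∣ g := (Nat.Prime.coprime_iff_not_dvd hp).mp hcop.symm
  set t := p ^ (m - 1) * (p - 1) with ht
  set A : Finset ℕ := (range (p ^ m)).filter (fun u => ¬ p ∣ u) with hA
  have hinj : ∀ x ∈ range t, ∀ y ∈ range t, g ^ x % p ^ m = g ^ y % p ^ m → x = y := by
    intro x hx y hy hxy
    have hcast : ((g : ZMod (p ^ m))) ^ x = ((g : ZMod (p ^ m))) ^ y := by
      have : ((g ^ x : ℕ) : ZMod (p ^ m)) = ((g ^ y : ℕ) : ZMod (p ^ m)) :=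
        (ZMod.natCast_eq_natCast_iff _ _ _).2 hxy
      push_cast at this
      exact this
    have hx' : x ∈ Set.Iio (orderOf ((g : ℕ) : ZMod (p ^ m))) := by
      rw [hord]; exact mem_range.mp hx
    have hy' : y ∈ Set.Iio (orderOf ((g : ℕ) : ZMod (p ^ m))) := by
      rw [hord]; exact mem_range.mp hy
    exact pow_injOn_Iio_orderOf hx' hy' hcast
  have hmulti : (range (p ^ m)).filter (fun u => p ∣ u)
      = (range (p ^ (m - 1))).image (fun v => p * v) := by
    ext u
    simp only [mem_filter, mem_range, mem_image]
    constructor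
    · rintro ⟨hu, v, rfl⟩
      refine ⟨v, ?_, rfl⟩
      have hpm' : p ^ m = p * p ^ (m - 1) := by
        rw [← pow_succ']; congr 1; omega
      rw [hpm'] at hu
      exact lt_of_mul_lt_mul_left hu (by omega)
    · rintro ⟨v, hv, rfl⟩
      refine ⟨?_, ⟨v, rfl⟩⟩
      have hpm' : p ^ m = p * p ^ (m - 1) := by
        rw [← pow_succ']; congr 1; omega
      rw [hpm']
      exact mul_lt_mul_of_pos_left hv (by omega : 0 < p)
  have hcard_multi : ((range (p ^ m)).filter (fun u => p ∣ u)).card = p ^ (m - 1) := by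
    rw [hmulti, Finset.card_image_of_injective _ (mul_right_injective₀ (by omega : p ≠ 0))]
    simp
  have hAcard : A.card = t := by
    have hsum := Finset.card_filter_add_card_filter_not
      (s := range (p ^ m)) (p := fun u => p ∣ u)
    rw [hcard_multi, Finset.card_range] at hsum
    have hpm' : p ^ m = p ^ (m - 1) * p := by rw [← pow_succ]; congr 1; omega
    have ht' : t = p ^ (m - 1) * p - p ^ (m - 1) := by
      rw [ht, Nat.mul_sub, mul_one]
    rw [← hA] at hsum
    omega
  have himg : (range t).image (fun s => g ^ s % p ^ m) = A := by
    apply Finset.eq_of_subset_of_card_le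
    · intro u hu
      simp only [mem_image, mem_range] at hu
      obtain ⟨s, hs, rfl⟩ := hu
      simp only [hA, mem_filter, mem_range]
      refine ⟨Nat.mod_lt _ hpm, fun hdvd => ?_⟩
      rw [Nat.dvd_mod_iff (dvd_pow_self p (by omega))] at hdvd
      exact hndg (hp.dvd_of_dvd_pow hdvd)
    · rw [hAcard, Finset.card_image_of_injOn (fun x hx y hy => hinj x hx y hy), Finset.card_range]
  have hsumA : ∑ s ∈ range t, β ^ (g ^ s % p ^ m) = ∑ u ∈ A, β ^ u := by
    rw [← himg, Finset.sum_image hinj]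
  have hβ1 : β ≠ 1 := hβ.ne_one hpm1
  have htotal : ∑ u ∈ range (p ^ m), β ^ u = 0 := by
    rw [geom_sum_eq hβ1, hβ.pow_eq_one, sub_self, zero_div]
  have hdivsum : ∑ u ∈ (range (p ^ m)).filter (fun u => p ∣ u), β ^ u
      = ∑ v ∈ range (p ^ (m - 1)), (β ^ p) ^ v := by
    rw [hmulti, Finset.sum_image (fun x _ y _ h =>
      mul_right_injective₀ (show p ≠ 0 by omega) h)]
    exact Finset.sum_congr rfl fun v _ => by rw [pow_mul]
  have hsplit : ∑ u ∈ A, β ^ u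
      = ∑ u ∈ range (p ^ m), β ^ u
        - ∑ u ∈ (range (p ^ m)).filter (fun u => p ∣ u), β ^ u := by
    rw [← Finset.sum_filter_add_sum_filter_not (range (p ^ m)) (fun u => p ∣ u)]
    rw [← hA]
    ring
  rw [hsumA, hsplit, htotal, hdivsum]
  by_cases hm1 : m = 1
  · subst hm1
    rw [if_pos rfl]
    simp [zero_sub, CharTwo.neg_eq]
  · have hβp : IsPrimitiveRoot (β ^ p) (p ^ (m - 1)) := by
      apply hβ.pow hpm
      rw [← pow_succ']
      congr 1
      omega
    have h1 : (β ^ p) ≠ 1 := hβp.ne_one (Nat.one_lt_pow (by omega) hp1)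
    rw [geom_sum_eq h1, hβp.pow_eq_one, sub_self, zero_div, sub_zero, if_neg hm1]

open Finset in
private lemma aux_level_sum (p e g m : ℕ) (hp : p.Prime) (r : ℕ) (he : 0 < e)
    (hef : e ∣ p - 1) (hr : 1 ≤ r) (hf : (p - 1) / e = 2 ^ r)
    (hcop : Nat.Coprime g p)
    (hord : orderOf ((g : ℕ) : ZMod (p ^ m)) = p ^ (m - 1) * (p - 1)) (hm : 1 ≤ m)
    (γ : AlgebraicClosure (ZMod 2)) (hγ : IsPrimitiveRoot γ (p ^ m)) (k k' : ℕ)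
    (hkk : k' % (p ^ (m - 1) * ((p - 1) / e))
      = (k + p ^ (m - 1) * ((p - 1) / e) / 2) % (p ^ (m - 1) * ((p - 1) / e))) :
    Hpoly p e g m k γ + Hpoly p e g m k' γ = if m = 1 then 1 else 0 := by
  set d := p ^ (m - 1) * ((p - 1) / e) with hd
  have hdpos : 0 < d := by
    rw [hd, hf]
    have := hp.pos
    positivity
  have hdeven : Even d := by
    rw [hd, hf]
    exact (Nat.even_pow.mpr ⟨even_two, by omega⟩).mul_left _
  obtain ⟨w0, hw0⟩ := hdeven
  have hd2 : d = d / 2 + d / 2 := by omega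
  set F : ℕ → AlgebraicClosure (ZMod 2) := fun i => Epoly p e g m (i % d) γ with hF
  have hFper : ∀ i, F (i + d) = F i := fun i => by
    simp only [hF, Nat.add_mod_right]
  have hH : ∀ κ : ℕ, Hpoly p e g m κ γ = ∑ i ∈ range (d / 2), F (i + κ) := by
    intro κ
    simp only [Hpoly, hF]
    rfl
  have hfull : ∑ i ∈ range d, F (i + k)
      = Hpoly p e g m k γ + Hpoly p e g m k' γ := by
    rw [hH k, hH k']
    conv_lhs => rw [hd2]
    rw [Finset.sum_range_add]
    congr 1
    refine Finset.sum_congr rfl fun x _ => ?_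
    simp only [hF]
    congr 1
    calc (d / 2 + x + k) % d = (x + (k + d / 2)) % d := by
          rw [show d / 2 + x + k = x + (k + d / 2) by omega]
      _ = (x % d + (k + d / 2) % d) % d := Nat.add_mod _ _ _
      _ = (x % d + k' % d) % d := by rw [hkk]
      _ = (x + k') % d := (Nat.add_mod _ _ _).symm
  have hrot : ∑ i ∈ range d, F (i + k) = ∑ i ∈ range d, F i := aux_sum_rot F d hFper k
  have hEsum : ∑ i ∈ range d, F i = ∑ i ∈ range d, Epoly p e g m i γ :=
    Finset.sum_congr rfl fun i hi => by
      simp only [hF]; rw [Nat.mod_eq_of_lt (mem_range.mp hi)]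
  have hcollapse : ∑ i ∈ range d, Epoly p e g m i γ
      = ∑ s ∈ range (d * e), γ ^ (g ^ s % p ^ m) := by
    simp only [Epoly]
    rw [← hd, Finset.sum_comm]
    exact (aux_sum_range_mul (fun s => γ ^ (g ^ s % p ^ m)) d e).symm
  have hde : d * e = p ^ (m - 1) * (p - 1) := by
    rw [hd, mul_assoc, Nat.div_mul_cancel hef]
  rw [← hfull, hrot, hEsum, hcollapse, hde]
  exact aux_sum_over_units p g m hp hcop hord hm γ hγ

/-- for `1 ≤ j ≤ n`, every index `i` and every `a` coprime to `p`,
`T_i^(p^j)(α_j^a) + T_((i+d_j/2) mod d_j)^(p^j)(α_j^a) = 1` in `ᾱ`.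
Here `α_j = α_n^(p^(n-j))` and `d_j = p^(j-1)·(p-1)/e`. -/
theorem Tpoly_complement
    (p : ℕ) (hp : p.Prime) (hodd : Odd p)
    (e r : ℕ) (he : 0 < e) (hef : e ∣ p - 1) (hr : 1 ≤ r) (hf : (p - 1) / e = 2 ^ r)
    (g : ℕ) (hg : orderOf (g : ZMod (p ^ 2)) = Nat.totient (p ^ 2))
    (n j : ℕ) (hj : 1 ≤ j) (hjn : j ≤ n)
    (α : AlgebraicClosure (ZMod 2)) (hα : IsPrimitiveRoot α (p ^ n))
    (a : ℕ) (ha : Nat.gcd a p = 1) :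
    ∀ i : ℕ,
      Tpoly p e g j i ((α ^ p ^ (n - j)) ^ a)
        + Tpoly p e g j
            ((i + p ^ (j - 1) * ((p - 1) / e) / 2) % (p ^ (j - 1) * ((p - 1) / e)))
            ((α ^ p ^ (n - j)) ^ a)
        = 1 := by
  intro i
  have hcop : Nat.Coprime g p := aux_g_coprime p g hp hg
  have hordm := aux_order_lift p g hp hodd hg
  have hppos := hp.pos
  simp only [Tpoly]
  rw [← Finset.sum_add_distrib]
  have hstep : ∀ l ∈ Finset.range j,
      Hpoly p e g (j - l) i (((α ^ p ^ (n - j)) ^ a) ^ p ^ l)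
        + Hpoly p e g (j - l)
            ((i + p ^ (j - 1) * ((p - 1) / e) / 2) % (p ^ (j - 1) * ((p - 1) / e)))
            (((α ^ p ^ (n - j)) ^ a) ^ p ^ l)
      = if j - l = 1 then 1 else 0 := by
    intro l hl
    have hlj : l < j := Finset.mem_range.mp hl
    have hm1 : 1 ≤ j - l := by omega
    set dm := p ^ (j - l - 1) * ((p - 1) / e) with hdm
    set dj := p ^ (j - 1) * ((p - 1) / e) with hdj
    have hdmeven : Even dm := by
      rw [hdm, hf]
      exact (Nat.even_pow.mpr ⟨even_two, by omega⟩).mul_left _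
    obtain ⟨c2, hc2⟩ := hdmeven
    have hdmpos : 0 < dm := by
      rw [hdm, hf]; positivity
    have hdvd : dm ∣ dj := mul_dvd_mul_right (pow_dvd_pow p (by omega)) _
    have hdj_eq : dj = p ^ l * dm := by
      rw [hdj, hdm, ← mul_assoc, ← pow_add]
      congr 2
      omega
    obtain ⟨w, hw⟩ := hodd.pow (n := l)
    have hdj2 : dj / 2 = w * dm + c2 := by
      have h1 : dj = 2 * (w * dm + c2) := by
        rw [hdj_eq, hw, hc2]; ring
      omega
    have hkk : ((i + dj / 2) % dj) % dm = (i + dm / 2) % dm := by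
      rw [Nat.mod_mod_of_dvd _ hdvd]
      have hc2' : dm / 2 = c2 := by omega
      rw [hdj2, hc2', show i + (w * dm + c2) = (i + c2) + w * dm by ring,
        Nat.add_mul_mod_self_right]
    have hprim : IsPrimitiveRoot (((α ^ p ^ (n - j)) ^ a) ^ p ^ l) (p ^ (j - l)) := by
      have hx : ((α ^ p ^ (n - j)) ^ a) ^ p ^ l = (α ^ p ^ (n - (j - l))) ^ a := by
        rw [← pow_mul, ← pow_mul, ← pow_mul]
        congr 1
        rw [show p ^ (n - j) * (a * p ^ l) = p ^ (n - j) * p ^ l * a by ring, ← pow_add]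
        have hnm : n - j + l = n - (j - l) := by omega
        rw [hnm]
      rw [hx]
      exact (hα.pow (by positivity) (by rw [← pow_add]; congr 1; omega)).pow_of_coprime a
        (Nat.Coprime.pow_right _ ha)
    exact aux_level_sum p e g (j - l) hp r he hef hr hf hcop (hordm (j - l) hm1) hm1
      _ hprim i _ hkk
  rw [Finset.sum_congr rfl hstep]
  have hcond : ∀ l ∈ Finset.range j,
      (if j - l = 1 then (1 : AlgebraicClosure (ZMod 2)) else 0)
        = (if l = j - 1 then 1 else 0) := by
    intro l hl
    have := Finset.mem_range.mp hl
    by_cases h : l = j - 1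
    · rw [if_pos h, if_pos (by omega)]
    · rw [if_neg h, if_neg (by omega)]
  rw [Finset.sum_congr rfl hcond,
    Finset.sum_ite_eq' (Finset.range j) (j - 1) (fun _ => (1 : AlgebraicClosure (ZMod 2)))]
  rw [if_pos (Finset.mem_range.mpr (by omega))]
end
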